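/- Let N ≥ 1, λ ≥ 0, and let A be the N×N real tridiagonal matrix with A_{jj} = 1 + 2λ for all j and A_{j,j+1} = A_{j+1,j} = −λ (all other entries zero). Then for every v ∈ ℝ^N, vᵀ A v ≥ ‖v‖². Consequently A is invertible and its inverse satisfies ‖A⁻¹‖₂ ≤ 1, for every λ ≥ 0 (unconditional stability of the implicit scheme). -/

import Mathlib

open Matrix
open scoped Matrix.Norms.L2Operator

private lemma sum_ite_const_le {N : ℕ} (P : Fin N → Prop) [DecidablePred P]
    (hP : ∀ j1 j2, P j1 → P j2 → j1 = j2) (c : ℝ) (hc : 0 ≤ c) :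
    ∑ j : Fin N, (if P j then c else 0) ≤ c := by
  rw [← Finset.sum_filter, Finset.sum_const, nsmul_eq_mul]
  have hcard : (Finset.univ.filter P).card ≤ 1 :=
    Finset.card_le_one.2 fun a ha b hb =>
      hP a b (Finset.mem_filter.1 ha).2 (Finset.mem_filter.1 hb).2
  calc ((Finset.univ.filter P).card : ℝ) * c ≤ 1 * c := by
        apply mul_le_mul_of_nonneg_right _ hc
        exact_mod_cast hcard
    _ = c := one_mul c

/-- **Unconditional stability of the implicit scheme for the heat equation.** Let `A` be the
`N×N` tridiagonal matrix with diagonal entries `1 + 2λ` and off-diagonal entries `-λ`,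
with `λ ≥ 0`. Then `vᵀ A v ≥ ‖v‖²` for all `v ∈ ℝ^N`; consequently `A` is invertible and
its inverse satisfies `‖A⁻¹‖₂ ≤ 1`. -/
theorem implicit_scheme_unconditional_stability (N : ℕ) (hN : 1 ≤ N) (lam : ℝ) (hlam : 0 ≤ lam)
    (A : Matrix (Fin N) (Fin N) ℝ)
    (hA : ∀ i j : Fin N, A i j =
      if i = j then 1 + 2 * lam
      else if (i : ℕ) + 1 = (j : ℕ) ∨ (j : ℕ) + 1 = (i : ℕ) then -lam
      else 0) :
    (∀ v : Fin N → ℝ, ∑ i, v i ^ 2 ≤ v ⬝ᵥ A.mulVec v) ∧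
      IsUnit A ∧ ‖A⁻¹‖ ≤ 1 := by
  -- Part 1: the quadratic form inequality.
  have key : ∀ v : Fin N → ℝ, ∑ i, v i ^ 2 ≤ v ⬝ᵥ A.mulVec v := by
    intro v
    have hterm : ∀ i j : Fin N, v i * (A i j * v j) =
        (1 + 2 * lam) * (if i = j then v i * v j else 0)
          - lam * (if (i : ℕ) + 1 = (j : ℕ) then v i * v j else 0)
          - lam * (if (j : ℕ) + 1 = (i : ℕ) then v i * v j else 0) := by
      intro i j
      rw [hA i j]
      by_cases h : i = j
      · subst h
        have h1 : ¬ ((i : ℕ) + 1 = (i : ℕ)) := by omega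
        simp [h1]
        ring
      · have hij : ¬ i = j := h
        by_cases h2 : (i : ℕ) + 1 = (j : ℕ)
        · have h3 : ¬ ((j : ℕ) + 1 = (i : ℕ)) := by omega
          simp [hij, h2, h3]
          ring
        · by_cases h3 : (j : ℕ) + 1 = (i : ℕ)
          · simp [hij, h2, h3]
            ring
          · simp [hij, h2, h3]
    have hdot : v ⬝ᵥ A.mulVec v = ∑ i, ∑ j, v i * (A i j * v j) := by
      simp [dotProduct, mulVec, Finset.mul_sum]
    -- diagonal sum
    have hdiag : ∑ i : Fin N, ∑ j : Fin N, (if i = j then v i * v j else 0)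
        = ∑ i, v i ^ 2 := by
      apply Finset.sum_congr rfl
      intro i _
      rw [Finset.sum_ite_eq (Finset.univ) i (fun j => v i * v j)]
      simp [sq]
    set E : ℝ := ∑ i : Fin N, ∑ j : Fin N, (if (i : ℕ) + 1 = (j : ℕ) then v i * v j else 0)
      with hE
    have hE2 : ∑ i : Fin N, ∑ j : Fin N, (if (j : ℕ) + 1 = (i : ℕ) then v i * v j else 0) = E := by
      rw [hE, Finset.sum_comm]
      apply Finset.sum_congr rfl; intro i _
      apply Finset.sum_congr rfl; intro j _
      rw [mul_comm]
    have hexpand : v ⬝ᵥ A.mulVec v = (1 + 2 * lam) * (∑ i, v i ^ 2) - 2 * lam * E := by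
      rw [hdot]
      have : ∑ i : Fin N, ∑ j : Fin N, v i * (A i j * v j)
          = (1 + 2 * lam) * (∑ i : Fin N, ∑ j : Fin N, (if i = j then v i * v j else 0))
            - lam * E
            - lam * (∑ i : Fin N, ∑ j : Fin N,
                (if (j : ℕ) + 1 = (i : ℕ) then v i * v j else 0)) := by
        rw [hE, Finset.mul_sum, Finset.mul_sum, Finset.mul_sum, ← Finset.sum_sub_distrib,
          ← Finset.sum_sub_distrib]
        apply Finset.sum_congr rfl; intro i _
        rw [Finset.mul_sum, Finset.mul_sum, Finset.mul_sum, ← Finset.sum_sub_distrib,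
          ← Finset.sum_sub_distrib]
        exact Finset.sum_congr rfl fun j _ => hterm i j
      rw [this, hdiag, hE2]
      ring
    -- bound E ≤ ∑ v i ^ 2
    have hEbound : E ≤ ∑ i, v i ^ 2 := by
      have step1 : E ≤ ∑ i : Fin N, ∑ j : Fin N,
          (if (i : ℕ) + 1 = (j : ℕ) then v i ^ 2 / 2 + v j ^ 2 / 2 else 0) := by
        apply Finset.sum_le_sum; intro i _
        apply Finset.sum_le_sum; intro j _
        by_cases h : (i : ℕ) + 1 = (j : ℕ)
        · simp only [h, if_true]
          nlinarith [sq_nonneg (v i - v j)]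
        · simp [h]
      have split : ∑ i : Fin N, ∑ j : Fin N,
          (if (i : ℕ) + 1 = (j : ℕ) then v i ^ 2 / 2 + v j ^ 2 / 2 else 0)
          = (∑ i : Fin N, ∑ j : Fin N, (if (i : ℕ) + 1 = (j : ℕ) then v i ^ 2 / 2 else 0))
            + (∑ j : Fin N, ∑ i : Fin N, (if (i : ℕ) + 1 = (j : ℕ) then v j ^ 2 / 2 else 0)) := by
        rw [show (∑ j : Fin N, ∑ i : Fin N, (if (i : ℕ) + 1 = (j : ℕ) then v j ^ 2 / 2 else 0))
            = ∑ i : Fin N, ∑ j : Fin N, (if (i : ℕ) + 1 = (j : ℕ) then v j ^ 2 / 2 else 0)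
          from Finset.sum_comm]
        rw [← Finset.sum_add_distrib]
        apply Finset.sum_congr rfl; intro i _
        rw [← Finset.sum_add_distrib]
        apply Finset.sum_congr rfl; intro j _
        by_cases h : (i : ℕ) + 1 = (j : ℕ) <;> simp [h]
      have b1 : ∑ i : Fin N, ∑ j : Fin N, (if (i : ℕ) + 1 = (j : ℕ) then v i ^ 2 / 2 else 0)
          ≤ ∑ i : Fin N, v i ^ 2 / 2 := by
        apply Finset.sum_le_sum; intro i _
        exact sum_ite_const_le _ (fun j1 j2 h1 h2 => Fin.ext (by omega)) _
          (by positivity)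
      have b2 : ∑ j : Fin N, ∑ i : Fin N, (if (i : ℕ) + 1 = (j : ℕ) then v j ^ 2 / 2 else 0)
          ≤ ∑ j : Fin N, v j ^ 2 / 2 := by
        apply Finset.sum_le_sum; intro j _
        exact sum_ite_const_le _ (fun i1 i2 h1 h2 => Fin.ext (by omega)) _
          (by positivity)
      have : ∑ i : Fin N, v i ^ 2 / 2 + ∑ j : Fin N, v j ^ 2 / 2 = ∑ i, v i ^ 2 := by
        rw [← Finset.sum_add_distrib]
        apply Finset.sum_congr rfl; intro i _; ring
      linarith
    nlinarith
  -- Symmetry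
  have hsymm : A.IsHermitian := by
    ext i j
    simp only [conjTranspose_apply, star_trivial]
    rw [hA i j, hA j i]
    by_cases h : i = j
    · simp [h]
    · have h' : ¬ j = i := fun hh => h hh.symm
      simp only [h, h', if_false]
      exact if_congr or_comm rfl rfl
  -- Positive definiteness
  have hpd : A.PosDef := by
    refine Matrix.PosDef.of_dotProduct_mulVec_pos hsymm fun x hx => ?_
    have hpos : 0 < ∑ i, x i ^ 2 := by
      obtain ⟨i, hi⟩ := Function.ne_iff.1 hx
      apply Finset.sum_pos' (fun j _ => sq_nonneg _)
      exact ⟨i, Finset.mem_univ i, sq_pos_of_ne_zero hi⟩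
    have := key x
    simp only [star_trivial]
    linarith
  refine ⟨key, hpd.isUnit, ?_⟩
  -- Norm bound
  rw [Matrix.l2_opNorm_def]
  apply ContinuousLinearMap.opNorm_le_bound _ zero_le_one
  intro x
  rw [one_mul]
  set x' : Fin N → ℝ := WithLp.equiv 2 (Fin N → ℝ) x with hx'
  set w : Fin N → ℝ := A⁻¹ *ᵥ x' with hw
  show ‖(WithLp.equiv 2 (Fin N → ℝ)).symm w‖ ≤ ‖x‖
  have hAw : A *ᵥ w = x' := by
    rw [hw, Matrix.mulVec_mulVec, Matrix.mul_nonsing_inv _ ((Matrix.isUnit_iff_isUnit_det A).1 hpd.isUnit), Matrix.one_mulVec]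
  set u : EuclideanSpace ℝ (Fin N) := (WithLp.equiv 2 (Fin N → ℝ)).symm w with hu
  have hnorm_sq : ‖u‖ ^ 2 = ∑ i, w i ^ 2 := by
    rw [← real_inner_self_eq_norm_sq]
    simp only [hu, PiLp.inner_apply, RCLike.inner_apply, conj_trivial, sq, WithLp.equiv_symm_apply]
  have hdotwx : w ⬝ᵥ x' = inner ℝ u x := by
    simp [dotProduct, hu, PiLp.inner_apply, RCLike.inner_apply, hx', mul_comm]
  have h1 : ‖u‖ ^ 2 ≤ w ⬝ᵥ A.mulVec w := by rw [hnorm_sq]; exact key w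
  have h2 : w ⬝ᵥ A.mulVec w = inner ℝ u x := by rw [hAw]; exact hdotwx
  have h3 : (inner ℝ u x : ℝ) ≤ ‖u‖ * ‖x‖ := real_inner_le_norm u x
  have hup : ‖u‖ ^ 2 ≤ ‖u‖ * ‖x‖ := by rw [h2] at h1; linarith
  rcases eq_or_lt_of_le (norm_nonneg u) with h | h
  · rw [← h]; exact norm_nonneg x
  · nlinarith
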